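/- IP-weighted identification for history-restricted marginal structural models (equation (B.3.2)): Assume (A1′)–(A3′). Then for every a̲ ∈ {0,1}^m: 𝔼[1{A̲(K−m)=a̲} · W_rsw^(m) · Y] = P(A̲(K−m)=a̲) · 𝔼[Y^{a̲}]; consequently, if P(A̲(K−m)=1_m) > 0 and P(A̲(K−m)=0_m) > 0, then θ_rsw^(m) = θ^(m). -/

import Mathlib

open MeasureTheory Finset
open scoped Classical

namespace MSMPaper

noncomputable section

variable {Ω : Type*} [MeasurableSpace Ω] {𝓛 : Type*}

/-- Conditional probability `P(E | F) = P(E ∩ F) / P(F)` as a real number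
(junk value `0` when `P F = 0`). -/
def cP (P : Measure Ω) (E F : Set Ω) : ℝ := (P (E ∩ F)).toReal / (P F).toReal

variable {K : ℕ}

/-- Event `Ā(t−1) = b̄` (treatment history up to, not including, time `t`). -/
def Apast (A : Fin K → Ω → Bool) (t : ℕ) (b : Fin K → Bool) : Set Ω :=
  {ω | ∀ k : Fin K, (k : ℕ) < t → A k ω = b k}

/-- Event `L̄(t) = l̄` (covariate history up to and including time `t`). -/
def Lpast (L : Fin K → Ω → 𝓛) (t : ℕ) (l : Fin K → 𝓛) : Set Ω :=
  {ω | ∀ k : Fin K, (k : ℕ) ≤ t → L k ω = l k}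

/-- Event `A̲(s, t−1) = b` (treatment history from time `s` up to, not including, `t`). -/
def Aseg (A : Fin K → Ω → Bool) (s t : ℕ) (b : Fin K → Bool) : Set Ω :=
  {ω | ∀ k : Fin K, s ≤ (k : ℕ) → (k : ℕ) < t → A k ω = b k}

/-- Event `A̲(K−m) = a̲` for a (last-`m`) treatment vector `as`. -/
def EtrV (A : Fin K → Ω → Bool) (m : ℕ) (as : Fin K → Bool) : Set Ω :=
  {ω | ∀ k : Fin K, K - m ≤ (k : ℕ) → A k ω = as k}

/-- Event `A̲(K−m) = a_m` (constant `a` on the last `m` coordinates). -/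
def Etr (A : Fin K → Ω → Bool) (m : ℕ) (a : Bool) : Set Ω :=
  EtrV A m (fun _ => a)

/-- Stabilized weights `W_sw`. -/
def Wsw (P : Measure Ω) (A : Fin K → Ω → Bool) (L : Fin K → Ω → 𝓛) : Ω → ℝ :=
  fun ω => ∏ k : Fin K,
    cP P {ω' | A k ω' = A k ω} (Apast A (k : ℕ) (fun j => A j ω)) /
      cP P {ω' | A k ω' = A k ω}
        (Lpast L (k : ℕ) (fun j => L j ω) ∩ Apast A (k : ℕ) (fun j => A j ω))

/-- Restricted stabilized weights `W_rsw^(m)`. -/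
def Wrsw (P : Measure Ω) (A : Fin K → Ω → Bool) (L : Fin K → Ω → 𝓛) (m : ℕ) : Ω → ℝ :=
  fun ω => ∏ k ∈ Finset.univ.filter (fun k : Fin K => K - m ≤ (k : ℕ)),
    cP P {ω' | A k ω' = A k ω} (Aseg A (K - m) (k : ℕ) (fun j => A j ω)) /
      cP P {ω' | A k ω' = A k ω}
        (Lpast L (k : ℕ) (fun j => L j ω) ∩ Apast A (k : ℕ) (fun j => A j ω))

/-- Partial stabilized weights `W_psw^(m)`. -/
def Wpsw (P : Measure Ω) (A : Fin K → Ω → Bool) (L : Fin K → Ω → 𝓛) (m : ℕ) : Ω → ℝ :=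
  fun ω => ∏ k ∈ Finset.univ.filter (fun k : Fin K => K - m ≤ (k : ℕ)),
    cP P {ω' | A k ω' = A k ω} (Apast A (k : ℕ) (fun j => A j ω)) /
      cP P {ω' | A k ω' = A k ω}
        (Lpast L (k : ℕ) (fun j => L j ω) ∩ Apast A (k : ℕ) (fun j => A j ω))

/-- IP-weighted contrast `θ_W^(m)`. -/
def θW (P : Measure Ω) (A : Fin K → Ω → Bool) (m : ℕ) (W Y : Ω → ℝ) : ℝ :=
  (∫ ω in Etr A m true, W ω * Y ω ∂P) / (∫ ω in Etr A m true, W ω ∂P) -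
    (∫ ω in Etr A m false, W ω * Y ω ∂P) / (∫ ω in Etr A m false, W ω ∂P)

/-- `rev j` is the time index `K − 1 − j`; the paper's coefficient `ψ_{j+1}`
multiplies `a(K − (j+1)) = a(rev j)`. -/
def rev (j : Fin K) : Fin K := ⟨K - 1 - (j : ℕ), by have := j.isLt; omega⟩

/-- `θ^(K) = 𝔼[Y^{1_K}] − 𝔼[Y^{0_K}]`. -/
def θKfull (P : Measure Ω) (Ypot : (Fin K → Bool) → Ω → ℝ) : ℝ :=
  (∫ ω, Ypot (fun _ => true) ω ∂P) - ∫ ω, Ypot (fun _ => false) ω ∂P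

/-- (A1) consistency. -/
def A1ok (A : Fin K → Ω → Bool) (Y : Ω → ℝ) (Ypot : (Fin K → Bool) → Ω → ℝ) : Prop :=
  ∀ (a : Fin K → Bool) (ω : Ω), (∀ k, A k ω = a k) → Y ω = Ypot a ω

/-- (A2) sequential exchangeability. -/
def A2ok (P : Measure Ω) (A : Fin K → Ω → Bool) (L : Fin K → Ω → 𝓛)
    (Ypot : (Fin K → Bool) → Ω → ℝ) : Prop :=
  ∀ (t : Fin K) (a : Fin K → Bool) (B : Set ℝ), MeasurableSet B →
    ∀ (av : Bool) (l : Fin K → 𝓛) (b : Fin K → Bool),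
      0 < P (Lpast L (t : ℕ) l ∩ Apast A (t : ℕ) b) →
      cP P ({ω | Ypot a ω ∈ B} ∩ {ω | A t ω = av}) (Lpast L (t : ℕ) l ∩ Apast A (t : ℕ) b) =
        cP P {ω | Ypot a ω ∈ B} (Lpast L (t : ℕ) l ∩ Apast A (t : ℕ) b) *
          cP P {ω | A t ω = av} (Lpast L (t : ℕ) l ∩ Apast A (t : ℕ) b)

/-- (A3) positivity. -/
def A3ok (P : Measure Ω) (A : Fin K → Ω → Bool) (L : Fin K → Ω → 𝓛) : Prop :=
  ∀ (t : Fin K) (av : Bool) (l : Fin K → 𝓛) (b : Fin K → Bool),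
    0 < P (Lpast L (t : ℕ) l ∩ Apast A (t : ℕ) b) →
    0 < cP P {ω | A t ω = av} (Lpast L (t : ℕ) l ∩ Apast A (t : ℕ) b)

/-- The marginal structural model `𝔼[Y^{ā}] = ψ₀ + Σ_{j=1}^K ψ_j a(K−j)`;
here `ψ j` is the paper's `ψ_{j+1}`, the coefficient of `a(K−1−j)`. -/
def MSMeq (P : Measure Ω) (Ypot : (Fin K → Bool) → Ω → ℝ) (ψ0 : ℝ) (ψ : Fin K → ℝ) : Prop :=
  ∀ a : Fin K → Bool,
    (∫ ω, Ypot a ω ∂P) = ψ0 + ∑ j : Fin K, ψ j * (if a (rev j) = true then 1 else 0)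

/-- (A5) conditional MSM given the past treatment history `Ā(K−m−1)`. -/
def A5ok (P : Measure Ω) (A : Fin K → Ω → Bool) (Ypot : (Fin K → Bool) → Ω → ℝ)
    (m : ℕ) : Prop :=
  ∀ b : Fin K → Bool, 0 < P (Apast A (K - m) b) →
    ∃ (φ0 : ℝ) (φ : Fin K → ℝ), ∀ a : Fin K → Bool,
      (∫ ω in Apast A (K - m) b, Ypot a ω ∂P) / (P (Apast A (K - m) b)).toReal =
        φ0 + ∑ j : Fin K, φ j * (if a (rev j) = true then 1 else 0)

/-- `q_{j+1} = P(A(K−1−j)=1 | A̲(K−m)=1_m) − P(A(K−1−j)=1 | A̲(K−m)=0_m)`. -/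
def qcoef (P : Measure Ω) (A : Fin K → Ω → Bool) (m : ℕ) (j : Fin K) : ℝ :=
  cP P {ω | A (rev j) ω = true} (Etr A m true) -
    cP P {ω | A (rev j) ω = true} (Etr A m false)

end

noncomputable section

variable {Ω : Type*} [MeasurableSpace Ω] {𝓛 : Type*} {K : ℕ}

/-- `Y^{a̲}(ω) = Y^{(Ā(K−m−1)(ω), a̲)}(ω)`: the potential outcome under the regime that
follows the observed history before time `K−m` and the regime `as` afterwards. -/
def Ypotm (A : Fin K → Ω → Bool) (m : ℕ) (Ypot : (Fin K → Bool) → Ω → ℝ)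
    (as : Fin K → Bool) : Ω → ℝ :=
  fun ω => Ypot (fun k => if (k : ℕ) < K - m then A k ω else as k) ω

end

noncomputable section Aux

variable {Ω : Type*} [MeasurableSpace Ω] {𝓛 : Type*} [MeasurableSpace 𝓛]
  [MeasurableSingletonClass 𝓛] {K : ℕ}

lemma measurableSet_Apast (A : Fin K → Ω → Bool) (hA : ∀ k, Measurable (A k))
    (t : ℕ) (b : Fin K → Bool) : MeasurableSet (Apast A t b) := by
  have : Apast A t b = ⋂ k : Fin K, ⋂ (_ : (k : ℕ) < t), (A k) ⁻¹' {b k} := by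
    ext ω; simp [Apast]
  rw [this]
  exact MeasurableSet.iInter fun k => MeasurableSet.iInter fun _ =>
    (hA k) (measurableSet_singleton _)

lemma measurableSet_Lpast (L : Fin K → Ω → 𝓛) (hL : ∀ k, Measurable (L k))
    (t : ℕ) (l : Fin K → 𝓛) : MeasurableSet (Lpast L t l) := by
  have : Lpast L t l = ⋂ k : Fin K, ⋂ (_ : (k : ℕ) ≤ t), (L k) ⁻¹' {l k} := by
    ext ω; simp [Lpast]
  rw [this]
  exact MeasurableSet.iInter fun k => MeasurableSet.iInter fun _ =>
    (hL k) (measurableSet_singleton _)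

lemma measurableSet_EtrV (A : Fin K → Ω → Bool) (hA : ∀ k, Measurable (A k))
    (m : ℕ) (as : Fin K → Bool) : MeasurableSet (EtrV A m as) := by
  have : EtrV A m as = ⋂ k : Fin K, ⋂ (_ : K - m ≤ (k : ℕ)), (A k) ⁻¹' {as k} := by
    ext ω; simp [EtrV]
  rw [this]
  exact MeasurableSet.iInter fun k => MeasurableSet.iInter fun _ =>
    (hA k) (measurableSet_singleton _)

lemma measurableSet_Aev (A : Fin K → Ω → Bool) (hA : ∀ k, Measurable (A k))
    (t : Fin K) (av : Bool) : MeasurableSet {ω | A t ω = av} := by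
  have : {ω | A t ω = av} = (A t) ⁻¹' {av} := by ext ω; simp
  rw [this]; exact (hA t) (measurableSet_singleton _)

lemma cP_nonneg (P : Measure Ω) (E F : Set Ω) : 0 ≤ cP P E F :=
  div_nonneg ENNReal.toReal_nonneg ENNReal.toReal_nonneg

lemma cP_mul_toReal (P : Measure Ω) [IsFiniteMeasure P] (E F : Set Ω) :
    cP P E F * (P F).toReal = (P (E ∩ F)).toReal := by
  by_cases h : (P F).toReal = 0
  · have hF : P F = 0 := by
      have := measure_ne_top P F
      simpa [ENNReal.toReal_eq_zero_iff, this] using h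
    have h2 : P (E ∩ F) = 0 := measure_mono_null Set.inter_subset_right hF
    simp [cP, hF, h2]
  · exact div_mul_cancel₀ _ h

lemma ci_integral (P : Measure Ω) [IsProbabilityMeasure P]
    (Yp : Ω → ℝ) (hm : Measurable Yp) (hi : Integrable Yp P)
    (E F : Set Ω) (hE : MeasurableSet E) (hF : MeasurableSet F)
    (h : ∀ B : Set ℝ, MeasurableSet B →
      cP P ({ω | Yp ω ∈ B} ∩ E) F = cP P {ω | Yp ω ∈ B} F * cP P E F) :
    ∫ ω in E ∩ F, Yp ω ∂P = cP P E F * ∫ ω in F, Yp ω ∂P := by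
  set c := cP P E F with hc
  have hc0 : 0 ≤ c := cP_nonneg P E F
  have hmeas : Measure.map Yp (P.restrict (E ∩ F))
      = ENNReal.ofReal c • Measure.map Yp (P.restrict F) := by
    ext B hB
    rw [Measure.smul_apply, Measure.map_apply hm hB, Measure.map_apply hm hB,
      Measure.restrict_apply (hm hB), Measure.restrict_apply (hm hB)]
    have hB' := h B hB
    have e1 : {ω | Yp ω ∈ B} = Yp ⁻¹' B := rfl
    rw [e1] at hB'
    have htr : (P (Yp ⁻¹' B ∩ (E ∩ F))).toReal = c * (P (Yp ⁻¹' B ∩ F)).toReal := by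
      have h1 := congrArg (· * (P F).toReal) hB'
      rw [cP_mul_toReal, mul_comm (cP P (Yp ⁻¹' B) F) c, mul_assoc, cP_mul_toReal] at h1
      rw [← Set.inter_assoc]
      exact h1
    calc P (Yp ⁻¹' B ∩ (E ∩ F))
        = ENNReal.ofReal ((P (Yp ⁻¹' B ∩ (E ∩ F))).toReal) :=
          (ENNReal.ofReal_toReal (measure_ne_top _ _)).symm
      _ = ENNReal.ofReal (c * (P (Yp ⁻¹' B ∩ F)).toReal) := by rw [htr]
      _ = ENNReal.ofReal c * ENNReal.ofReal ((P (Yp ⁻¹' B ∩ F)).toReal) :=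
          ENNReal.ofReal_mul hc0
      _ = ENNReal.ofReal c • P (Yp ⁻¹' B ∩ F) := by
          rw [ENNReal.ofReal_toReal (measure_ne_top _ _)]; rfl
  calc ∫ ω in E ∩ F, Yp ω ∂P
      = ∫ x, x ∂(Measure.map Yp (P.restrict (E ∩ F))) :=
        (integral_map hm.aemeasurable aestronglyMeasurable_id).symm
    _ = ∫ x, x ∂(ENNReal.ofReal c • Measure.map Yp (P.restrict F)) := by rw [hmeas]
    _ = (ENNReal.ofReal c).toReal • ∫ x, x ∂(Measure.map Yp (P.restrict F)) :=
        integral_smul_measure _ _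
    _ = c * ∫ ω in F, Yp ω ∂P := by
        rw [ENNReal.toReal_ofReal hc0, smul_eq_mul]
        congr 1
        exact integral_map hm.aemeasurable aestronglyMeasurable_id

variable [Fintype 𝓛]

lemma card_hist (A : Fin K → Ω → Bool) (L : Fin K → Ω → 𝓛) (t : ℕ) (ω ω' : Ω) :
    (univ.filter fun p : (Fin K → 𝓛) × (Fin K → Bool) =>
        ω ∈ Lpast L t p.1 ∩ Apast A t p.2).card =
    (univ.filter fun p : (Fin K → 𝓛) × (Fin K → Bool) =>
        ω' ∈ Lpast L t p.1 ∩ Apast A t p.2).card := by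
  apply Finset.card_bij'
    (fun p _ => ((fun k : Fin K => if (k : ℕ) ≤ t then L k ω' else p.1 k),
                 (fun k : Fin K => if (k : ℕ) < t then A k ω' else p.2 k)))
    (fun p _ => ((fun k : Fin K => if (k : ℕ) ≤ t then L k ω else p.1 k),
                 (fun k : Fin K => if (k : ℕ) < t then A k ω else p.2 k)))
  · intro p hp
    simp only [Finset.mem_filter, Finset.mem_univ, true_and, Set.mem_inter_iff] at hp ⊢
    constructor
    · intro k hk; simp [Lpast, hk]
    · intro k hk; simp [Apast, hk]
  · intro p hp
    simp only [Finset.mem_filter, Finset.mem_univ, true_and, Set.mem_inter_iff] at hp ⊢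
    constructor
    · intro k hk; simp [Lpast, hk]
    · intro k hk; simp [Apast, hk]
  · intro p hp
    simp only [Finset.mem_filter, Finset.mem_univ, true_and, Set.mem_inter_iff,
      Lpast, Apast, Set.mem_setOf_eq] at hp
    obtain ⟨h1, h2⟩ := hp
    refine Prod.ext (funext fun k => ?_) (funext fun k => ?_)
    · by_cases hk : (k : ℕ) ≤ t <;> simp [hk, (h1 k ·)]
    · by_cases hk : (k : ℕ) < t <;> simp [hk, (h2 k ·)]
  · intro p hp
    simp only [Finset.mem_filter, Finset.mem_univ, true_and, Set.mem_inter_iff,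
      Lpast, Apast, Set.mem_setOf_eq] at hp
    obtain ⟨h1, h2⟩ := hp
    refine Prod.ext (funext fun k => ?_) (funext fun k => ?_)
    · by_cases hk : (k : ℕ) ≤ t <;> simp [hk, (h1 k ·)]
    · by_cases hk : (k : ℕ) < t <;> simp [hk, (h2 k ·)]


lemma step_partition (P : Measure Ω) [IsProbabilityMeasure P]
    (A : Fin K → Ω → Bool) (L : Fin K → Ω → 𝓛)
    (hA : ∀ k, Measurable (A k)) (hL : ∀ k, Measurable (L k)) (t : ℕ)
    (f f' : (Fin K → 𝓛) → (Fin K → Bool) → ℝ)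
    (hf : ∀ l b l' b', (∀ k : Fin K, (k : ℕ) ≤ t → l k = l' k) →
      (∀ k : Fin K, (k : ℕ) < t → b k = b' k) → f l b = f l' b')
    (hf' : ∀ l b l' b', (∀ k : Fin K, (k : ℕ) ≤ t → l k = l' k) →
      (∀ k : Fin K, (k : ℕ) < t → b k = b' k) → f' l b = f' l' b')
    (h h' : Ω → ℝ) (hh : Integrable h P) (hh' : Integrable h' P)
    (heq : ∀ (l : Fin K → 𝓛) (b : Fin K → Bool),
      f l b * ∫ ω in Lpast L t l ∩ Apast A t b, h ω ∂P
        = f' l b * ∫ ω in Lpast L t l ∩ Apast A t b, h' ω ∂P) :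
    ∫ ω, f (fun k => L k ω) (fun k => A k ω) * h ω ∂P
      = ∫ ω, f' (fun k => L k ω) (fun k => A k ω) * h' ω ∂P := by
  have hne : Nonempty Ω := by
    by_contra hc
    rw [not_nonempty_iff] at hc
    have h1 : P Set.univ = 1 := measure_univ
    rw [Set.univ_eq_empty_iff.mpr hc] at h1
    simp at h1
  obtain ⟨ω₀⟩ := hne
  set c : ℕ := (univ.filter fun p : (Fin K → 𝓛) × (Fin K → Bool) =>
    ω₀ ∈ Lpast L t p.1 ∩ Apast A t p.2).card with hc
  have hcard : ∀ ω, (univ.filter fun p : (Fin K → 𝓛) × (Fin K → Bool) =>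
      ω ∈ Lpast L t p.1 ∩ Apast A t p.2).card = c := fun ω => card_hist A L t ω ω₀
  have hcpos : 0 < c := by
    rw [hc]
    apply Finset.card_pos.mpr
    exact ⟨((fun k => L k ω₀), (fun k => A k ω₀)), by
      simp [Finset.mem_filter, Lpast, Apast]⟩
  have hmsF : ∀ (l : Fin K → 𝓛) (b : Fin K → Bool),
      MeasurableSet (Lpast L t l ∩ Apast A t b) := fun l b =>
    (measurableSet_Lpast L hL t l).inter (measurableSet_Apast A hA t b)
  have main : ∀ (g : (Fin K → 𝓛) → (Fin K → Bool) → ℝ),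
      (∀ l b l' b', (∀ k : Fin K, (k : ℕ) ≤ t → l k = l' k) →
        (∀ k : Fin K, (k : ℕ) < t → b k = b' k) → g l b = g l' b') →
      ∀ (u : Ω → ℝ), Integrable u P →
      (c : ℝ) * ∫ ω, g (fun k => L k ω) (fun k => A k ω) * u ω ∂P
        = ∑ p : (Fin K → 𝓛) × (Fin K → Bool),
            g p.1 p.2 * ∫ ω in Lpast L t p.1 ∩ Apast A t p.2, u ω ∂P := by
    intro g hg u hu
    have hpt : ∀ ω, (c : ℝ) * (g (fun k => L k ω) (fun k => A k ω) * u ω)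
        = ∑ p : (Fin K → 𝓛) × (Fin K → Bool),
            (Lpast L t p.1 ∩ Apast A t p.2).indicator
              (fun ω' => g p.1 p.2 * u ω') ω := by
      intro ω
      have e1 : ∑ p : (Fin K → 𝓛) × (Fin K → Bool),
          (Lpast L t p.1 ∩ Apast A t p.2).indicator (fun ω' => g p.1 p.2 * u ω') ω
          = ∑ p ∈ univ.filter (fun p : (Fin K → 𝓛) × (Fin K → Bool) =>
              ω ∈ Lpast L t p.1 ∩ Apast A t p.2), g p.1 p.2 * u ω := by
        rw [Finset.sum_filter]
        apply Finset.sum_congr rfl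
        intro p _
        by_cases hp : ω ∈ Lpast L t p.1 ∩ Apast A t p.2 <;>
          simp [Set.indicator, hp]
      rw [e1]
      have e2 : ∀ p ∈ univ.filter (fun p : (Fin K → 𝓛) × (Fin K → Bool) =>
          ω ∈ Lpast L t p.1 ∩ Apast A t p.2),
          g p.1 p.2 * u ω = g (fun k => L k ω) (fun k => A k ω) * u ω := by
        intro p hp
        simp only [Finset.mem_filter, Set.mem_inter_iff, Lpast, Apast,
          Set.mem_setOf_eq] at hp
        congr 1
        exact hg p.1 p.2 _ _ (fun k hk => (hp.2.1 k hk).symm) (fun k hk => (hp.2.2 k hk).symm)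
      rw [Finset.sum_congr rfl e2, Finset.sum_const, hcard, nsmul_eq_mul]
    calc (c : ℝ) * ∫ ω, g (fun k => L k ω) (fun k => A k ω) * u ω ∂P
        = ∫ ω, (c : ℝ) * (g (fun k => L k ω) (fun k => A k ω) * u ω) ∂P :=
          (integral_const_mul _ _).symm
      _ = ∫ ω, ∑ p : (Fin K → 𝓛) × (Fin K → Bool),
            (Lpast L t p.1 ∩ Apast A t p.2).indicator
              (fun ω' => g p.1 p.2 * u ω') ω ∂P :=
          integral_congr_ae (Filter.Eventually.of_forall hpt)
      _ = ∑ p : (Fin K → 𝓛) × (Fin K → Bool),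
            ∫ ω, (Lpast L t p.1 ∩ Apast A t p.2).indicator
              (fun ω' => g p.1 p.2 * u ω') ω ∂P :=
          integral_finset_sum _ (fun p _ => (hu.const_mul _).indicator (hmsF p.1 p.2))
      _ = ∑ p : (Fin K → 𝓛) × (Fin K → Bool),
            g p.1 p.2 * ∫ ω in Lpast L t p.1 ∩ Apast A t p.2, u ω ∂P := by
          apply Finset.sum_congr rfl
          intro p _
          rw [integral_indicator (hmsF p.1 p.2), integral_const_mul _ _]
  have h1 := main f hf h hh
  have h2 := main f' hf' h' hh'
  have h3 : (c : ℝ) * ∫ ω, f (fun k => L k ω) (fun k => A k ω) * h ω ∂P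
      = (c : ℝ) * ∫ ω, f' (fun k => L k ω) (fun k => A k ω) * h' ω ∂P := by
    rw [h1, h2]
    exact Finset.sum_congr rfl fun p _ => heq p.1 p.2
  exact mul_left_cancel₀ (Nat.cast_ne_zero.mpr hcpos.ne') h3


lemma Ypotm_eq_sum (A : Fin K → Ω → Bool) (m : ℕ) (Ypot : (Fin K → Bool) → Ω → ℝ)
    (as : Fin K → Bool) :
    Ypotm A m Ypot as = fun ω => ∑ b : Fin K → Bool,
      ({ω' | ∀ k, A k ω' = b k} : Set Ω).indicator
        (Ypot (fun k => if (k : ℕ) < K - m then b k else as k)) ω := by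
  funext ω
  rw [Finset.sum_eq_single_of_mem (fun k => A k ω) (Finset.mem_univ _)]
  · rw [Set.indicator_of_mem (by simp [Set.mem_setOf_eq])]
    rfl
  · intro b _ hb
    apply Set.indicator_of_notMem
    simp only [Set.mem_setOf_eq]
    intro hall
    exact hb (funext fun k => (hall k).symm)

lemma Ypotm_measurable (A : Fin K → Ω → Bool) (hA : ∀ k, Measurable (A k))
    (m : ℕ) (Ypot : (Fin K → Bool) → Ω → ℝ) (hYpm : ∀ a, Measurable (Ypot a))
    (as : Fin K → Bool) : Measurable (Ypotm A m Ypot as) := by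
  rw [Ypotm_eq_sum]
  apply Finset.measurable_sum
  intro b _
  apply Measurable.indicator (hYpm _)
  have : ({ω' | ∀ k, A k ω' = b k} : Set Ω) = ⋂ k : Fin K, (A k) ⁻¹' {b k} := by
    ext ω'; simp
  rw [this]
  exact MeasurableSet.iInter fun k => (hA k) (measurableSet_singleton _)

lemma Ypotm_integrable (P : Measure Ω) (A : Fin K → Ω → Bool) (hA : ∀ k, Measurable (A k))
    (m : ℕ) (Ypot : (Fin K → Bool) → Ω → ℝ) (hYpi : ∀ a, Integrable (Ypot a) P)
    (as : Fin K → Bool) : Integrable (Ypotm A m Ypot as) P := by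
  rw [Ypotm_eq_sum]
  apply integrable_finset_sum
  intro b _
  apply Integrable.indicator (hYpi _)
  have : ({ω' | ∀ k, A k ω' = b k} : Set Ω) = ⋂ k : Fin K, (A k) ⁻¹' {b k} := by
    ext ω'; simp
  rw [this]
  exact MeasurableSet.iInter fun k => (hA k) (measurableSet_singleton _)

lemma chain_rule (P : Measure Ω) [IsProbabilityMeasure P]
    (A : Fin K → Ω → Bool) (m : ℕ) (as : Fin K → Bool) :
    (P (EtrV A m as)).toReal =
      ∏ k ∈ univ.filter (fun k : Fin K => K - m ≤ (k : ℕ)),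
        cP P {ω' | A k ω' = as k} (Aseg A (K - m) (k : ℕ) as) := by
  have main : ∀ t : ℕ, (P (Aseg A (K - m) t as)).toReal =
      ∏ k ∈ univ.filter (fun k : Fin K => K - m ≤ (k : ℕ) ∧ (k : ℕ) < t),
        cP P {ω' | A k ω' = as k} (Aseg A (K - m) (k : ℕ) as) := by
    intro t
    induction t with
    | zero =>
      have h1 : Aseg A (K - m) 0 as = Set.univ := by
        ext ω; simp [Aseg]
      have h2 : univ.filter (fun k : Fin K => K - m ≤ (k : ℕ) ∧ (k : ℕ) < 0) = ∅ := by
        apply Finset.filter_false_of_mem; intro k _; simp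
      simp [h1, h2]
    | succ t ih =>
      by_cases hcase : K - m ≤ t ∧ t < K
      · obtain ⟨hsm, htK⟩ := hcase
        set T : Fin K := ⟨t, htK⟩ with hT
        have hseg : Aseg A (K - m) (t + 1) as = {ω' | A T ω' = as T} ∩ Aseg A (K - m) t as := by
          ext ω
          simp only [Aseg, Set.mem_inter_iff, Set.mem_setOf_eq]
          constructor
          · intro H
            exact ⟨H T hsm (by simp [hT]), fun k h1 h2 => H k h1 (by omega)⟩
          · rintro ⟨H1, H2⟩ k h1 h2
            by_cases hk : (k : ℕ) < t
            · exact H2 k h1 hk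
            · have : k = T := Fin.ext (by simp [hT]; omega)
              rw [this]; exact H1
        have hTnot : T ∉ univ.filter (fun k : Fin K => K - m ≤ (k : ℕ) ∧ (k : ℕ) < t) := by
          simp [hT]
        have hfil : univ.filter (fun k : Fin K => K - m ≤ (k : ℕ) ∧ (k : ℕ) < t + 1)
            = insert T (univ.filter (fun k : Fin K => K - m ≤ (k : ℕ) ∧ (k : ℕ) < t)) := by
          ext k
          simp only [Finset.mem_filter, Finset.mem_univ, true_and, Finset.mem_insert]
          constructor
          · rintro ⟨h1, h2⟩
            by_cases hk : (k : ℕ) < t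
            · exact Or.inr ⟨h1, hk⟩
            · exact Or.inl (Fin.ext (by simp [hT]; omega))
          · rintro (rfl | ⟨h1, h2⟩)
            · exact ⟨hsm, by simp [hT]⟩
            · exact ⟨h1, by omega⟩
        rw [hseg, hfil, Finset.prod_insert hTnot, ← ih]
        have := (cP_mul_toReal P {ω' | A T ω' = as T} (Aseg A (K - m) t as)).symm
        rw [this]
      · have hseg : Aseg A (K - m) (t + 1) as = Aseg A (K - m) t as := by
          ext ω
          simp only [Aseg, Set.mem_setOf_eq]
          constructor
          · intro H k h1 h2
            exact H k h1 (by omega)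
          · intro H k h1 h2
            have hkK := k.isLt
            by_cases hk : (k : ℕ) < t
            · exact H k h1 hk
            · exfalso; omega
        have hfil : univ.filter (fun k : Fin K => K - m ≤ (k : ℕ) ∧ (k : ℕ) < t + 1)
            = univ.filter (fun k : Fin K => K - m ≤ (k : ℕ) ∧ (k : ℕ) < t) := by
          ext k
          have hkK := k.isLt
          simp only [Finset.mem_filter, Finset.mem_univ, true_and]
          constructor
          · rintro ⟨h1, h2⟩; exact ⟨h1, by omega⟩
          · rintro ⟨h1, h2⟩; exact ⟨h1, by omega⟩
        rw [hseg, hfil, ih]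
  have hEtr : EtrV A m as = Aseg A (K - m) K as := by
    ext ω
    simp only [EtrV, Aseg, Set.mem_setOf_eq]
    exact ⟨fun H k h1 _ => H k h1, fun H k h1 => H k h1 k.isLt⟩
  have hfilK : univ.filter (fun k : Fin K => K - m ≤ (k : ℕ) ∧ (k : ℕ) < K)
      = univ.filter (fun k : Fin K => K - m ≤ (k : ℕ)) := by
    ext k; simp [k.isLt]
  rw [hEtr, main K, hfilK]


/-- Denominator at time `k` for regime `as`, as a function of full histories. -/
def denA (P : Measure Ω) (A : Fin K → Ω → Bool) (L : Fin K → Ω → 𝓛)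
    (as : Fin K → Bool) (k : Fin K) (l : Fin K → 𝓛) (b : Fin K → Bool) : ℝ :=
  cP P {ω' | A k ω' = as k} (Lpast L (k : ℕ) l ∩ Apast A (k : ℕ) b)

/-- Partial inverse-probability weight up to time `t`, for regime `as`. -/
def fwt (P : Measure Ω) (A : Fin K → Ω → Bool) (L : Fin K → Ω → 𝓛)
    (m : ℕ) (as : Fin K → Bool) (t : ℕ) (l : Fin K → 𝓛) (b : Fin K → Bool) : ℝ :=
  (if (∀ k : Fin K, K - m ≤ (k : ℕ) → (k : ℕ) < t → b k = as k) then (1 : ℝ) else 0) *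
    ∏ k ∈ univ.filter (fun k : Fin K => K - m ≤ (k : ℕ) ∧ (k : ℕ) < t),
      (denA P A L as k l b)⁻¹

lemma core (P : Measure Ω) [IsProbabilityMeasure P]
    {m : ℕ}
    (A : Fin K → Ω → Bool) (L : Fin K → Ω → 𝓛)
    (hA : ∀ k, Measurable (A k)) (hL : ∀ k, Measurable (L k))
    (as : Fin K → Bool)
    (Yp : Ω → ℝ) (hYm : Measurable Yp) (hYi : Integrable Yp P)
    (hA2 : ∀ t : Fin K, K - m ≤ (t : ℕ) → ∀ B : Set ℝ, MeasurableSet B →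
      ∀ (l : Fin K → 𝓛) (b : Fin K → Bool),
      0 < P (Lpast L (t : ℕ) l ∩ Apast A (t : ℕ) b) →
      cP P ({ω | Yp ω ∈ B} ∩ {ω | A t ω = as t}) (Lpast L (t : ℕ) l ∩ Apast A (t : ℕ) b) =
        cP P {ω | Yp ω ∈ B} (Lpast L (t : ℕ) l ∩ Apast A (t : ℕ) b) *
          cP P {ω | A t ω = as t} (Lpast L (t : ℕ) l ∩ Apast A (t : ℕ) b))
    (hA3 : ∀ t : Fin K, K - m ≤ (t : ℕ) → ∀ (l : Fin K → 𝓛) (b : Fin K → Bool),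
      0 < P (Lpast L (t : ℕ) l ∩ Apast A (t : ℕ) b) →
      0 < cP P {ω | A t ω = as t} (Lpast L (t : ℕ) l ∩ Apast A (t : ℕ) b)) :
    ∫ ω in EtrV A m as, Wrsw P A L m ω * Yp ω ∂P
      = (P (EtrV A m as)).toReal * ∫ ω, Yp ω ∂P := by
  -- the backward induction
  have key : ∀ t, K - m ≤ t → t ≤ K →
      ∫ ω, fwt P A L m as t (fun k => L k ω) (fun k => A k ω) * Yp ω ∂P
        = ∫ ω, Yp ω ∂P := by
    intro t ht
    induction t, ht using Nat.le_induction with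
    | base =>
      intro _
      have h1 : ∀ l b, fwt P A L m as (K - m) l b = 1 := by
        intro l b
        unfold fwt
        rw [if_pos (fun k h1 h2 => absurd h2 (by omega)),
          Finset.filter_false_of_mem (fun k _ => by omega), Finset.prod_empty]
        norm_num
      simp only [h1, one_mul]
    | succ t ht ih =>
      intro ht1
      have htK : t < K := ht1
      have ihe := ih (by omega)
      set T : Fin K := ⟨t, htK⟩ with hTdef
      -- trunc-invariance of fwt at level t (for both t and t+1 versions)
      have hinv : ∀ s, s ≤ t + 1 →
          ∀ (l : Fin K → 𝓛) (b : Fin K → Bool) (l' : Fin K → 𝓛) (b' : Fin K → Bool),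
          (∀ k : Fin K, (k : ℕ) ≤ t → l k = l' k) →
          (∀ k : Fin K, (k : ℕ) < t → b k = b' k) →
          (∀ k : Fin K, K - m ≤ (k : ℕ) → (k : ℕ) < s → b k = as k) =
            (∀ k : Fin K, K - m ≤ (k : ℕ) → (k : ℕ) < s → b' k = as k) →
          fwt P A L m as s l b = fwt P A L m as s l' b' := by
        intro s hs l b l' b' hl hb hcond
        unfold fwt
        congr 1
        · exact if_congr (iff_of_eq hcond) rfl rfl
        apply Finset.prod_congr rfl
        intro k hk
        simp only [Finset.mem_filter, Finset.mem_univ, true_and] at hk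
        have hkt : (k : ℕ) < t + 1 := by omega
        congr 1
        unfold denA
        have e1 : Lpast L (k : ℕ) l = Lpast L (k : ℕ) l' := by
          ext ω; simp only [Lpast, Set.mem_setOf_eq]
          constructor <;> intro H j hj
          · rw [← hl j (by omega)]; exact H j hj
          · rw [hl j (by omega)]; exact H j hj
        have e2 : Apast A (k : ℕ) b = Apast A (k : ℕ) b' := by
          ext ω; simp only [Apast, Set.mem_setOf_eq]
          constructor <;> intro H j hj
          · rw [← hb j (by omega)]; exact H j hj
          · rw [hb j (by omega)]; exact H j hj
        rw [e1, e2]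
      -- split off the time-`t` factor
      have hsplit : ∀ b : Fin K → Bool,
          (if (∀ k : Fin K, K - m ≤ (k : ℕ) → (k : ℕ) < t + 1 → b k = as k) then (1:ℝ) else 0)
            = (if (∀ k : Fin K, K - m ≤ (k : ℕ) → (k : ℕ) < t → b k = as k) then (1:ℝ) else 0)
              * (if b T = as T then (1:ℝ) else 0) := by
        intro b
        have hiff : (∀ k : Fin K, K - m ≤ (k : ℕ) → (k : ℕ) < t + 1 → b k = as k)
            ↔ ((∀ k : Fin K, K - m ≤ (k : ℕ) → (k : ℕ) < t → b k = as k) ∧ b T = as T) := by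
          constructor
          · intro H
            exact ⟨fun k h1 h2 => H k h1 (by omega), H T ht (Nat.lt_succ_self t)⟩
          · rintro ⟨H1, H2⟩ k h1 h2
            by_cases hk : (k : ℕ) < t
            · exact H1 k h1 hk
            · have hkT : k = T := Fin.ext (by simp only [hTdef]; omega)
              rw [hkT]; exact H2
        rw [if_congr hiff rfl rfl]
        by_cases hc1 : (∀ k : Fin K, K - m ≤ (k : ℕ) → (k : ℕ) < t → b k = as k) <;>
          by_cases hc2 : b T = as T <;> simp [hc1, hc2]
      have hTnot : T ∉ univ.filter (fun k : Fin K => K - m ≤ (k : ℕ) ∧ (k : ℕ) < t) := by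
        simp [hTdef]
      have hfil : univ.filter (fun k : Fin K => K - m ≤ (k : ℕ) ∧ (k : ℕ) < t + 1)
          = insert T (univ.filter (fun k : Fin K => K - m ≤ (k : ℕ) ∧ (k : ℕ) < t)) := by
        ext k
        simp only [Finset.mem_filter, Finset.mem_univ, true_and, Finset.mem_insert]
        constructor
        · rintro ⟨h1, h2⟩
          by_cases hk : (k : ℕ) < t
          · exact Or.inr ⟨h1, hk⟩
          · exact Or.inl (Fin.ext (by simp only [hTdef]; omega))
        · rintro (rfl | ⟨h1, h2⟩)
          · exact ⟨ht, Nat.lt_succ_self t⟩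
          · exact ⟨h1, by omega⟩
      -- the two truncation-invariant weight functions
      set f1 : (Fin K → 𝓛) → (Fin K → Bool) → ℝ := fun l b =>
        (if (∀ k : Fin K, K - m ≤ (k : ℕ) → (k : ℕ) < t → b k = as k) then (1:ℝ) else 0) *
          ∏ k ∈ univ.filter (fun k : Fin K => K - m ≤ (k : ℕ) ∧ (k : ℕ) < t + 1),
            (denA P A L as k l b)⁻¹ with hf1def
      set h1 : Ω → ℝ := fun ω => (if A T ω = as T then (1:ℝ) else 0) * Yp ω with hh1def
      have hEset : MeasurableSet {ω | A T ω = as T} := measurableSet_Aev A hA T (as T)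
      have hh1ind : h1 = Set.indicator {ω | A T ω = as T} Yp := by
        funext ω
        by_cases hE : ω ∈ {ω | A T ω = as T} <;>
          simp [hh1def, Set.indicator, hE, Set.mem_setOf_eq] <;>
          simp only [Set.mem_setOf_eq] at hE <;> simp [hE]
      have hh1int : Integrable h1 P := by rw [hh1ind]; exact hYi.indicator hEset
      -- denominator congruence under truncation
      have hden : ∀ (k : Fin K), (k : ℕ) ≤ t →
          ∀ (l : Fin K → 𝓛) (b : Fin K → Bool) (l' : Fin K → 𝓛) (b' : Fin K → Bool),
          (∀ j : Fin K, (j : ℕ) ≤ t → l j = l' j) →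
          (∀ j : Fin K, (j : ℕ) < t → b j = b' j) →
          denA P A L as k l b = denA P A L as k l' b' := by
        intro k hk l b l' b' hl hb
        unfold denA
        have e1 : Lpast L (k : ℕ) l = Lpast L (k : ℕ) l' := by
          ext ω; simp only [Lpast, Set.mem_setOf_eq]
          constructor <;> intro H j hj
          · rw [← hl j (by omega)]; exact H j hj
          · rw [hl j (by omega)]; exact H j hj
        have e2 : Apast A (k : ℕ) b = Apast A (k : ℕ) b' := by
          ext ω; simp only [Apast, Set.mem_setOf_eq]
          constructor <;> intro H j hj
          · rw [← hb j (by omega)]; exact H j hj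
          · rw [hb j (by omega)]; exact H j hj
        rw [e1, e2]
      have hcondinv : ∀ (b b' : Fin K → Bool), (∀ j : Fin K, (j : ℕ) < t → b j = b' j) →
          (∀ k : Fin K, K - m ≤ (k : ℕ) → (k : ℕ) < t → b k = as k)
            = (∀ k : Fin K, K - m ≤ (k : ℕ) → (k : ℕ) < t → b' k = as k) := by
        intro b b' hb
        apply propext
        constructor <;> intro H k hk1 hk2
        · rw [← hb k hk2]; exact H k hk1 hk2
        · rw [hb k hk2]; exact H k hk1 hk2
      have hf1inv : ∀ (l : Fin K → 𝓛) (b : Fin K → Bool) (l' : Fin K → 𝓛) (b' : Fin K → Bool),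
          (∀ k : Fin K, (k : ℕ) ≤ t → l k = l' k) →
          (∀ k : Fin K, (k : ℕ) < t → b k = b' k) → f1 l b = f1 l' b' := by
        intro l b l' b' hl hb
        rw [hf1def]
        simp only
        congr 1
        · exact if_congr (iff_of_eq (hcondinv b b' hb)) rfl rfl
        · apply Finset.prod_congr rfl
          intro k hk
          simp only [Finset.mem_filter, Finset.mem_univ, true_and] at hk
          rw [hden k (by omega) l b l' b' hl hb]
      have hfwtinv : ∀ (l : Fin K → 𝓛) (b : Fin K → Bool) (l' : Fin K → 𝓛) (b' : Fin K → Bool),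
          (∀ k : Fin K, (k : ℕ) ≤ t → l k = l' k) →
          (∀ k : Fin K, (k : ℕ) < t → b k = b' k) →
          fwt P A L m as t l b = fwt P A L m as t l' b' := by
        intro l b l' b' hl hb
        unfold fwt
        congr 1
        · exact if_congr (iff_of_eq (hcondinv b b' hb)) rfl rfl
        · apply Finset.prod_congr rfl
          intro k hk
          simp only [Finset.mem_filter, Finset.mem_univ, true_and] at hk
          rw [hden k (by omega) l b l' b' hl hb]
      -- the per-history identity
      have hstep : ∀ (l : Fin K → 𝓛) (b : Fin K → Bool),
          f1 l b * ∫ ω in Lpast L t l ∩ Apast A t b, h1 ω ∂P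
            = fwt P A L m as t l b * ∫ ω in Lpast L t l ∩ Apast A t b, Yp ω ∂P := by
        intro l b
        by_cases hPF : P (Lpast L t l ∩ Apast A t b) = 0
        · have hz : P.restrict (Lpast L t l ∩ Apast A t b) = 0 :=
            Measure.restrict_eq_zero.mpr hPF
          rw [hz]
          simp
        · have hpos : 0 < P (Lpast L t l ∩ Apast A t b) := by
            exact lt_of_le_of_ne (zero_le) (Ne.symm hPF)
          have hmsF : MeasurableSet (Lpast L t l ∩ Apast A t b) :=
            (measurableSet_Lpast L hL t l).inter (measurableSet_Apast A hA t b)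
          have hci := ci_integral P Yp hYm hYi {ω | A T ω = as T}
            (Lpast L t l ∩ Apast A t b) hEset hmsF
            (fun B hB => hA2 T ht B hB l b hpos)
          have hint1 : ∫ ω in Lpast L t l ∩ Apast A t b, h1 ω ∂P
              = ∫ ω in {ω | A T ω = as T} ∩ (Lpast L t l ∩ Apast A t b), Yp ω ∂P := by
            rw [hh1ind, setIntegral_indicator hEset, Set.inter_comm]
          have hdpos : 0 < cP P {ω | A T ω = as T} (Lpast L t l ∩ Apast A t b) :=
            hA3 T ht l b hpos
          have hdA : denA P A L as T l b
              = cP P {ω | A T ω = as T} (Lpast L t l ∩ Apast A t b) := rfl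
          rw [hint1, hci, hf1def]
          simp only
          unfold fwt
          rw [hfil, Finset.prod_insert hTnot, hdA]
          have hne : cP P {ω | A T ω = as T} (Lpast L t l ∩ Apast A t b) ≠ 0 :=
            ne_of_gt hdpos
          field_simp
      -- put it together
      calc ∫ ω, fwt P A L m as (t + 1) (fun k => L k ω) (fun k => A k ω) * Yp ω ∂P
          = ∫ ω, f1 (fun k => L k ω) (fun k => A k ω) * h1 ω ∂P := by
            apply integral_congr_ae (Filter.Eventually.of_forall _)
            intro ω
            unfold fwt
            rw [hsplit, hf1def, hh1def]
            simp only
            ring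
        _ = ∫ ω, fwt P A L m as t (fun k => L k ω) (fun k => A k ω) * Yp ω ∂P :=
            step_partition P A L hA hL t f1 (fwt P A L m as t) hf1inv hfwtinv
              h1 Yp hh1int hYi hstep
        _ = ∫ ω, Yp ω ∂P := ihe
  -- assemble
  set N : ℝ := ∏ k ∈ univ.filter (fun k : Fin K => K - m ≤ (k : ℕ)),
    cP P {ω' | A k ω' = as k} (Aseg A (K - m) (k : ℕ) as) with hN
  have hfilK : univ.filter (fun k : Fin K => K - m ≤ (k : ℕ) ∧ (k : ℕ) < K)
      = univ.filter (fun k : Fin K => K - m ≤ (k : ℕ)) := by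
    ext k; simp [k.isLt]
  have hWpt : ∀ ω ∈ EtrV A m as, Wrsw P A L m ω
      = N * ∏ k ∈ univ.filter (fun k : Fin K => K - m ≤ (k : ℕ)),
          (denA P A L as k (fun j => L j ω) (fun j => A j ω))⁻¹ := by
    intro ω hω
    have hω' : ∀ k : Fin K, K - m ≤ (k : ℕ) → A k ω = as k := hω
    unfold Wrsw
    have e : ∀ k ∈ univ.filter (fun k : Fin K => K - m ≤ (k : ℕ)),
        cP P {ω' | A k ω' = A k ω} (Aseg A (K - m) (k : ℕ) (fun j => A j ω)) /
          cP P {ω' | A k ω' = A k ω}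
            (Lpast L (k : ℕ) (fun j => L j ω) ∩ Apast A (k : ℕ) (fun j => A j ω))
        = cP P {ω' | A k ω' = as k} (Aseg A (K - m) (k : ℕ) as) /
            denA P A L as k (fun j => L j ω) (fun j => A j ω) := by
      intro k hk
      simp only [Finset.mem_filter, Finset.mem_univ, true_and] at hk
      have hAk : A k ω = as k := hω' k hk
      have eseg : Aseg A (K - m) (k : ℕ) (fun j => A j ω) = Aseg A (K - m) (k : ℕ) as := by
        ext ω'; simp only [Aseg, Set.mem_setOf_eq]
        constructor <;> intro H j hj1 hj2
        · rw [← hω' j hj1]; exact H j hj1 hj2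
        · rw [hω' j hj1]; exact H j hj1 hj2
      rw [hAk, eseg]
      rfl
    rw [Finset.prod_congr rfl e, Finset.prod_div_distrib, div_eq_mul_inv,
      ← Finset.prod_inv_distrib]
  have hms : MeasurableSet (EtrV A m as) := measurableSet_EtrV A hA m as
  have hEind : ∀ ω, (EtrV A m as).indicator (fun ω => Wrsw P A L m ω * Yp ω) ω
      = N * (fwt P A L m as K (fun k => L k ω) (fun k => A k ω) * Yp ω) := by
    intro ω
    by_cases hω : ω ∈ EtrV A m as
    · rw [Set.indicator_of_mem hω, hWpt ω hω]
      unfold fwt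
      rw [if_pos (fun (k : Fin K) h1 _ => hω k h1), hfilK]
      ring
    · rw [Set.indicator_of_notMem hω]
      unfold fwt
      rw [if_neg (fun H => hω (fun k hk => H k hk k.isLt))]
      ring
  calc ∫ ω in EtrV A m as, Wrsw P A L m ω * Yp ω ∂P
      = ∫ ω, (EtrV A m as).indicator (fun ω => Wrsw P A L m ω * Yp ω) ω ∂P :=
        (integral_indicator hms).symm
    _ = ∫ ω, N * (fwt P A L m as K (fun k => L k ω) (fun k => A k ω) * Yp ω) ∂P :=
        integral_congr_ae (Filter.Eventually.of_forall hEind)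
    _ = N * ∫ ω, fwt P A L m as K (fun k => L k ω) (fun k => A k ω) * Yp ω ∂P :=
        integral_const_mul _ _
    _ = N * ∫ ω, Yp ω ∂P := by rw [key K (Nat.sub_le K m) le_rfl]
    _ = (P (EtrV A m as)).toReal * ∫ ω, Yp ω ∂P := by
        rw [chain_rule P A m as, ← hN]



end Aux
/-- IP-weighted identification for history-restricted MSMs (equation (B.3.2)):
under (A1′)–(A3′), `𝔼[1{A̲(K−m)=a̲} W_rsw^(m) Y] = P(A̲(K−m)=a̲) 𝔼[Y^{a̲}]`;
consequently `θ_rsw^(m) = θ^(m)` when both target events have positive probability. -/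
theorem hrmsm_identification
    {Ω : Type*} [MeasurableSpace Ω] {𝓛 : Type*} [MeasurableSpace 𝓛]
    [Fintype 𝓛] [Nonempty 𝓛] [MeasurableSingletonClass 𝓛]
    (P : Measure Ω) [IsProbabilityMeasure P]
    {K m : ℕ} (hK : 1 ≤ K) (hm1 : 1 ≤ m) (hmK : m ≤ K)
    (A : Fin K → Ω → Bool) (L : Fin K → Ω → 𝓛)
    (hA : ∀ k, Measurable (A k)) (hL : ∀ k, Measurable (L k))
    (Y : Ω → ℝ) (hY : Measurable Y)
    (Ypot : (Fin K → Bool) → Ω → ℝ)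
    (hYpm : ∀ a, Measurable (Ypot a)) (hYpi : ∀ a, Integrable (Ypot a) P)
    -- (A1′) restricted consistency
    (hA1' : ∀ (as : Fin K → Bool) (ω : Ω),
      (∀ k : Fin K, K - m ≤ (k : ℕ) → A k ω = as k) → Y ω = Ypotm A m Ypot as ω)
    -- (A2′) restricted sequential exchangeability
    (hA2' : ∀ t : Fin K, K - m ≤ (t : ℕ) →
      ∀ (as : Fin K → Bool) (B : Set ℝ), MeasurableSet B →
      ∀ (av : Bool) (l : Fin K → 𝓛) (b : Fin K → Bool),
        0 < P (Lpast L (t : ℕ) l ∩ Apast A (t : ℕ) b) →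
        cP P ({ω | Ypotm A m Ypot as ω ∈ B} ∩ {ω | A t ω = av})
            (Lpast L (t : ℕ) l ∩ Apast A (t : ℕ) b) =
          cP P {ω | Ypotm A m Ypot as ω ∈ B} (Lpast L (t : ℕ) l ∩ Apast A (t : ℕ) b) *
            cP P {ω | A t ω = av} (Lpast L (t : ℕ) l ∩ Apast A (t : ℕ) b))
    -- (A3′) restricted positivity
    (hA3' : ∀ t : Fin K, K - m ≤ (t : ℕ) →
      ∀ (av : Bool) (l : Fin K → 𝓛) (b : Fin K → Bool),
        0 < P (Lpast L (t : ℕ) l ∩ Apast A (t : ℕ) b) →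
        0 < cP P {ω | A t ω = av} (Lpast L (t : ℕ) l ∩ Apast A (t : ℕ) b)) :
    (∀ as : Fin K → Bool,
      (∫ ω in EtrV A m as, Wrsw P A L m ω * Y ω ∂P) =
        (P (EtrV A m as)).toReal * ∫ ω, Ypotm A m Ypot as ω ∂P) ∧
    (0 < P (Etr A m true) → 0 < P (Etr A m false) →
      θW P A m (Wrsw P A L m) Y =
        (∫ ω, Ypotm A m Ypot (fun _ => true) ω ∂P) -
          ∫ ω, Ypotm A m Ypot (fun _ => false) ω ∂P) := by
  have part1 : ∀ as : Fin K → Bool,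
      (∫ ω in EtrV A m as, Wrsw P A L m ω * Y ω ∂P) =
        (P (EtrV A m as)).toReal * ∫ ω, Ypotm A m Ypot as ω ∂P := by
    intro as
    have hcong : ∫ ω in EtrV A m as, Wrsw P A L m ω * Y ω ∂P
        = ∫ ω in EtrV A m as, Wrsw P A L m ω * Ypotm A m Ypot as ω ∂P := by
      apply setIntegral_congr_fun (measurableSet_EtrV A hA m as)
      intro ω hω
      simp only
      rw [hA1' as ω hω]
    rw [hcong]
    exact core P A L hA hL as (Ypotm A m Ypot as)
      (Ypotm_measurable A hA m Ypot hYpm as) (Ypotm_integrable P A hA m Ypot hYpi as)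
      (fun t ht B hB l b hpos => hA2' t ht as B hB (as t) l b hpos)
      (fun t ht l b hpos => hA3' t ht (as t) l b hpos)
  refine ⟨part1, ?_⟩
  intro h1 h0
  have hone : ∀ as : Fin K → Bool, ∫ ω in EtrV A m as, Wrsw P A L m ω ∂P
      = (P (EtrV A m as)).toReal := by
    intro as
    have hc := core P A L hA hL as (fun _ => (1:ℝ)) measurable_const (integrable_const 1)
      (fun t ht B hB l b hpos => by
        by_cases h1B : (1:ℝ) ∈ B
        · have e1 : {ω : Ω | (fun _ : Ω => (1:ℝ)) ω ∈ B} = Set.univ := by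
            ext ω; simp [h1B]
          rw [e1, Set.univ_inter]
          have huniv : cP P Set.univ (Lpast L (t:ℕ) l ∩ Apast A (t:ℕ) b) = 1 := by
            unfold cP
            rw [Set.univ_inter, div_self]
            exact ENNReal.toReal_ne_zero.mpr ⟨hpos.ne', measure_ne_top _ _⟩
          rw [huniv, one_mul]
        · have e1 : {ω : Ω | (fun _ : Ω => (1:ℝ)) ω ∈ B} = ∅ := by
            ext ω; simp [h1B]
          rw [e1, Set.empty_inter]
          unfold cP
          simp)
      (fun t ht l b hpos => hA3' t ht (as t) l b hpos)
    simpa using hc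
  have hp1 : (P (EtrV A m (fun _ => true))).toReal ≠ 0 :=
    (ENNReal.toReal_pos h1.ne' (measure_ne_top P _)).ne'
  have hp0 : (P (EtrV A m (fun _ => false))).toReal ≠ 0 :=
    (ENNReal.toReal_pos h0.ne' (measure_ne_top P _)).ne'
  unfold θW Etr
  rw [part1 (fun _ => true), part1 (fun _ => false), hone (fun _ => true),
    hone (fun _ => false), mul_div_cancel_left₀ _ hp1, mul_div_cancel_left₀ _ hp0]

end MSMPaper
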